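/- If P is a local Markov chain that is reversible with respect to the Gibbs distribution μ (i.e., P_{x,x^i} = P_{x^i,x}·e^{-∇_i H(x)} for all x ∈ S and i ∈ V), then for every Λ ⊆ V, LP_{Λ,DLR} ⊆ LP_{Λ,MC}. Consequently, for every f supported on Λ: min{ν(f) : ν ∈ LP_{Λ,MC}} ≤ min{ν(f) : ν ∈ LP_{Λ,DLR}} and max{ν(f) : ν ∈ LP_{Λ,DLR}} ≤ max{ν(f) : ν ∈ LP_{Λ,MC}}. -/

import Mathlib

namespace GibbsLP

variable {V : Type*} [Fintype V] [DecidableEq V]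

/-- Spin configurations on the vertex set `V`; the two spin values `-1, +1` are
encoded by the two-element type `Bool`. -/
abbrev Config (V : Type*) := V → Bool

/-- The configuration `x` with the spin at site `i` flipped (denoted `xⁱ` in the paper). -/
def flip (x : Config V) (i : V) : Config V := Function.update x i (!x i)

/-- Discrete gradient `∇ᵢ f (x) = f(xⁱ) - f(x)`. -/
def grad (f : Config V → ℝ) (i : V) (x : Config V) : ℝ := f (flip x i) - f x

/-- `f` depends only on the spins in `Λ`, i.e. `supp f ⊆ Λ`. -/
def SupportedOn (f : Config V → ℝ) (Λ : Set V) : Prop :=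
  ∀ i ∉ Λ, ∀ x, f (flip x i) = f x

/-- The support `supp f = {i : ∇ᵢ f ≠ 0}` of an observable. -/
def sptSet (f : Config V → ℝ) : Set V := {i | ∃ x, f (flip x i) ≠ f x}

/-- Sup norm of an observable. -/
noncomputable def supNorm {α : Type*} (f : α → ℝ) : ℝ := ⨆ x, |f x|

/-- The Hamiltonian `H(x) = β ∑_{{i,j} ∈ E} h_{ij}(x_i, x_j)`; each unordered edge is
counted once (hence the factor `1/2` for the ordered double sum). -/
noncomputable def ham (G : SimpleGraph V) [DecidableRel G.Adj] (β : ℝ)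
    (h : V → V → Bool → Bool → ℝ) (x : Config V) : ℝ :=
  β * ((1 : ℝ) / 2 * ∑ i : V, ∑ j : V, if G.Adj i j then h i j (x i) (x j) else 0)

/-- The Gibbs distribution `μ(x) = e^{-H(x)} / Z`. -/
noncomputable def gibbs (H : Config V → ℝ) (x : Config V) : ℝ :=
  Real.exp (-H x) / ∑ y : Config V, Real.exp (-H y)

/-- `ν` is a probability distribution. -/
def IsDist {α : Type*} [Fintype α] (ν : α → ℝ) : Prop :=
  (∀ a, 0 ≤ ν a) ∧ ∑ a, ν a = 1

/-- Spin configurations on a subset `A ⊆ V`. -/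
abbrev SubConfig {V : Type*} (A : Finset V) := {i : V // i ∈ A} → Bool

/-- Restriction of a configuration to `A`. -/
def restrict (A : Finset V) (x : Config V) : SubConfig A := fun i => x i.1

/-- Extension of a configuration on `A` to all of `V` (by an arbitrary fixed value outside). -/
def extendC (A : Finset V) (y : SubConfig A) : Config V :=
  fun i => if h : i ∈ A then y ⟨i, h⟩ else true

/-- Flip the spin of `y : SubConfig A` at site `i` (identity if `i ∉ A`). -/
def flipAt (A : Finset V) (y : SubConfig A) (i : V) : SubConfig A :=
  fun j => if j.1 = i then !(y j) else y j

/-- External boundary `∂ᵉˣ Λ = {j ∉ Λ : ∃ i ∈ Λ, {i,j} ∈ E}`. -/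
def extBoundary (G : SimpleGraph V) [DecidableRel G.Adj] (Λ : Finset V) : Finset V :=
  Finset.univ.filter fun j => j ∉ Λ ∧ ∃ i ∈ Λ, G.Adj i j

/-- External boundary of a set of vertices (set version). -/
def extBoundarySet (G : SimpleGraph V) (A : Set V) : Set V :=
  {j | j ∉ A ∧ ∃ i ∈ A, G.Adj i j}

/-- `Λ̄ = Λ ∪ ∂ᵉˣ Λ`. -/
def closure (G : SimpleGraph V) [DecidableRel G.Adj] (Λ : Finset V) : Finset V :=
  Λ ∪ extBoundary G Λ

/-- `∇ᵢ H` evaluated on a configuration on `A` (well defined for `i ∈ Λ`, `A = Λ̄`, since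
then `∇ᵢ H` only depends on the spins in `Λ̄`). -/
noncomputable def gradH (A : Finset V) (H : Config V → ℝ) (i : V) (y : SubConfig A) : ℝ :=
  H (flip (extendC A y) i) - H (extendC A y)

/-- Expectation `ν(f)` of an observable `f` supported in `A` under a distribution `ν` on
`Σ^A`. -/
noncomputable def lexp {A : Finset V} (ν : SubConfig A → ℝ) (f : Config V → ℝ) : ℝ :=
  ∑ y : SubConfig A, ν y * f (extendC A y)

/-- The DLR linear program: distributions on `Σ^{Λ̄}` satisfying the local spin-flip
equations `ν(y) = ν(yⁱ) e^{∇ᵢH(y)}` for all `y` and `i ∈ Λ`. -/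
def LPdlr (G : SimpleGraph V) [DecidableRel G.Adj] (H : Config V → ℝ) (Λ : Finset V) :
    Set (SubConfig (closure G Λ) → ℝ) :=
  {ν | IsDist ν ∧ ∀ y, ∀ i ∈ Λ,
      ν y = ν (flipAt (closure G Λ) y i) * Real.exp (gradH (closure G Λ) H i y)}

/-- Values `ν(f)` over feasible points `ν` of the DLR linear program. -/
def dlrVals (G : SimpleGraph V) [DecidableRel G.Adj] (H : Config V → ℝ) (Λ : Finset V)
    (f : Config V → ℝ) : Set ℝ :=
  {t | ∃ ν ∈ LPdlr G H Λ, t = lexp ν f}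

/-- Marginal of a distribution `μ` on `Σ^V` on the sites in `A`. -/
noncomputable def marg (A : Finset V) (μ : Config V → ℝ) : SubConfig A → ℝ :=
  fun y => ∑ x : Config V, if restrict A x = y then μ x else 0

/-- The Hamiltonian truncated to `Λ` with boundary condition `η` on `∂ᵉˣ Λ`. -/
noncomputable def hamLoc (G : SimpleGraph V) [DecidableRel G.Adj] (β : ℝ)
    (h : V → V → Bool → Bool → ℝ) (Λ : Finset V)
    (η : SubConfig (extBoundary G Λ)) (x : SubConfig Λ) : ℝ :=
  β * ((1 : ℝ) / 2 * (∑ i ∈ Λ.attach, ∑ j ∈ Λ.attach,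
        if G.Adj i.1 j.1 then h i.1 j.1 (x i) (x j) else 0)
    + ∑ i ∈ Λ.attach, ∑ j ∈ (extBoundary G Λ).attach,
        if G.Adj i.1 j.1 then h i.1 j.1 (x i) (η j) else 0)

/-- The local Gibbs state `μ_Λ^η` on `Λ` with boundary condition `η`. -/
noncomputable def gibbsLoc (G : SimpleGraph V) [DecidableRel G.Adj] (β : ℝ)
    (h : V → V → Bool → Bool → ℝ) (Λ : Finset V)
    (η : SubConfig (extBoundary G Λ)) (x : SubConfig Λ) : ℝ :=
  Real.exp (-(hamLoc G β h Λ η x)) /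
    ∑ x' : SubConfig Λ, Real.exp (-(hamLoc G β h Λ η x'))

/-- Expectation `μ_Λ^η(f)` of an observable supported in `Λ` under the local Gibbs state. -/
noncomputable def gibbsLocExp (G : SimpleGraph V) [DecidableRel G.Adj] (β : ℝ)
    (h : V → V → Bool → Bool → ℝ) (Λ : Finset V)
    (η : SubConfig (extBoundary G Λ)) (f : Config V → ℝ) : ℝ :=
  ∑ x : SubConfig Λ, gibbsLoc G β h Λ η x * f (extendC Λ x)

/-- Combine `x ∈ Σ^Λ` and `η ∈ Σ^{∂ᵉˣΛ}` into a configuration `(x, η) ∈ Σ^{Λ̄}`. -/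
def glue (G : SimpleGraph V) [DecidableRel G.Adj] (Λ : Finset V)
    (x : SubConfig Λ) (η : SubConfig (extBoundary G Λ)) : SubConfig (closure G Λ) :=
  fun i => if h : i.1 ∈ Λ then x ⟨i.1, h⟩
    else η ⟨i.1, by
      have hi := i.2
      simp only [closure, Finset.mem_union] at hi
      tauto⟩

/-- A local (single-site, finite-range, bounded-rate) Markov chain on `Σ^V`. -/
structure IsLocalMC (G : SimpleGraph V) (P : Config V → Config V → ℝ) : Prop where
  nonneg : ∀ x x', 0 ≤ P x x'
  rowSum : ∀ x, ∑ x', P x x' = 1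
  /-- `P_{x,x'} = 0` if `x'` differs from `x` on more than one site. -/
  singleSite : ∀ x x', x' ≠ x → (∀ i, x' ≠ flip x i) → P x x' = 0
  /-- `P_{x,xⁱ}` only depends on the spins in the closed neighborhood of `i`. -/
  locality : ∀ i : V, ∀ x x' : Config V, x i = x' i →
      (∀ j, G.Adj i j → x j = x' j) → P x (flip x i) = P x' (flip x' i)
  /-- `P_{x,x'} ≤ 1/n` off the diagonal. -/
  bounded : ∀ x x', x ≠ x' → P x x' ≤ 1 / (Fintype.card V : ℝ)

/-- The Markov-chain linear program: distributions on `Σ^{Λ̄}` satisfying the stationarity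
equations `ν(Pg) = ν(g)` for all `g` supported on `Λ`. -/
def LPmc (G : SimpleGraph V) [DecidableRel G.Adj] (P : Config V → Config V → ℝ)
    (Λ : Finset V) : Set (SubConfig (closure G Λ) → ℝ) :=
  {ν | IsDist ν ∧ ∀ g : Config V → ℝ, SupportedOn g ↑Λ →
      lexp ν ((Matrix.of P).mulVec g) = lexp ν g}

/-- Values `ν(f)` over feasible points `ν` of the Markov-chain linear program. -/
def mcVals (G : SimpleGraph V) [DecidableRel G.Adj] (P : Config V → Config V → ℝ)
    (Λ : Finset V) (f : Config V → ℝ) : Set ℝ :=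
  {t | ∃ ν ∈ LPmc G P Λ, t = lexp ν f}

/-- The heat-bath dynamics: site `i` is flipped with probability
`c(i,x) = e^{-∇ᵢH(x)} / (1 + e^{-∇ᵢH(x)})`, each site being selected with probability `1/n`. -/
noncomputable def heatBath (H : Config V → ℝ) (x x' : Config V) : ℝ :=
  if x' = x then
    1 - (∑ i : V, Real.exp (-(grad H i x)) / (1 + Real.exp (-(grad H i x)))) /
      (Fintype.card V : ℝ)
  else
    ∑ i : V, if x' = flip x i then
      (Real.exp (-(grad H i x)) / (1 + Real.exp (-(grad H i x)))) / (Fintype.card V : ℝ)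
    else 0

/-- Marginal on `Σ^A` of a distribution on `Σ^B`, for `A ⊆ B`. -/
noncomputable def margTo {A B : Finset V} (hAB : A ⊆ B) (ν : SubConfig B → ℝ) :
    SubConfig A → ℝ :=
  fun z => ∑ y : SubConfig B,
    if (fun i : {i : V // i ∈ A} => y ⟨i.1, hAB i.2⟩) = z then ν y else 0

theorem closure_mono (G : SimpleGraph V) [DecidableRel G.Adj] {Λ Λ' : Finset V}
    (hs : Λ ⊆ Λ') : closure G Λ ⊆ closure G Λ' := by
  intro j hj
  simp only [closure, Finset.mem_union, extBoundary, Finset.mem_filter, Finset.mem_univ,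
    true_and] at hj ⊢
  by_cases hjΛ' : j ∈ Λ'
  · exact Or.inl hjΛ'
  · rcases hj with hj | ⟨hjn, i, hiΛ, hadj⟩
    · exact absurd (hs hj) hjΛ'
    · exact Or.inr ⟨hjΛ', i, hs hiΛ, hadj⟩
/-! ### Auxiliary lemmas -/

lemma flip_apply (x : Config V) (i j : V) :
    flip x i j = if j = i then !(x i) else x j := by
  simp [flip, Function.update_apply]

lemma flip_flip (x : Config V) (i : V) : flip (flip x i) i = x := by
  funext j
  by_cases hj : j = i <;> simp [flip_apply, hj]

lemma flipAt_flipAt (A : Finset V) (y : SubConfig A) (i : V) :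
    flipAt A (flipAt A y i) i = y := by
  funext j
  by_cases hj : j.1 = i <;> simp [flipAt, hj]

lemma extendC_flipAt {A : Finset V} (y : SubConfig A) {i : V} (hi : i ∈ A) :
    extendC A (flipAt A y i) = flip (extendC A y) i := by
  funext j
  by_cases hj : j = i
  · subst hj
    simp [extendC, flip_apply, flipAt, hi]
  · by_cases hjA : j ∈ A <;> simp [extendC, flip_apply, flipAt, hj, hjA]

lemma restrict_flip (A : Finset V) (x : Config V) (i : V) :
    restrict A (flip x i) = flipAt A (restrict A x) i := by
  funext j
  by_cases hj : j.1 = i <;> simp [restrict, flipAt, flip_apply, hj]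

lemma mem_closure_of_mem {G : SimpleGraph V} [DecidableRel G.Adj] {Λ : Finset V}
    {i : V} (hi : i ∈ Λ) : i ∈ closure G Λ :=
  Finset.mem_union_left _ hi

lemma adj_mem_closure {G : SimpleGraph V} [DecidableRel G.Adj] {Λ : Finset V}
    {i j : V} (hi : i ∈ Λ) (hadj : G.Adj i j) : j ∈ closure G Λ := by
  by_cases hj : j ∈ Λ
  · exact Finset.mem_union_left _ hj
  · exact Finset.mem_union_right _ (by
      simp only [extBoundary, Finset.mem_filter, Finset.mem_univ, true_and]
      exact ⟨hj, i, hi, hadj⟩)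

lemma grad_ham_local (G : SimpleGraph V) [DecidableRel G.Adj] (β : ℝ)
    (h : V → V → Bool → Bool → ℝ) (i : V) (x z : Config V)
    (hxi : x i = z i) (hnb : ∀ j, G.Adj i j → x j = z j) :
    grad (ham G β h) i x = grad (ham G β h) i z := by
  have key : ∀ w : Config V, grad (ham G β h) i w = β * ((1:ℝ)/2 * ∑ k : V, ∑ l : V,
      ((if G.Adj k l then h k l (flip w i k) (flip w i l) else 0)
        - (if G.Adj k l then h k l (w k) (w l) else 0))) := by
    intro w
    simp only [grad, ham, Finset.sum_sub_distrib]
    ring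
  rw [key, key]
  congr 1
  congr 1
  apply Finset.sum_congr rfl
  intro k _
  apply Finset.sum_congr rfl
  intro l _
  by_cases hkl : G.Adj k l
  · by_cases hk : k = i
    · subst hk
      have hl : l ≠ k := fun hlk => G.loopless.irrefl k (hlk ▸ hkl)
      simp only [hkl, if_true, flip_apply, if_pos rfl, if_neg hl, hxi, hnb l hkl]
    · by_cases hl : l = i
      · subst hl
        simp only [hkl, if_true, flip_apply, if_pos rfl, if_neg hk, hxi,
          hnb k hkl.symm]
      · simp [hkl, flip_apply, hk, hl]
  · simp [hkl]

lemma sum_P_mul_eq (G : SimpleGraph V) {P : Config V → Config V → ℝ}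
    (hP : IsLocalMC G P) (g : Config V → ℝ) (x : Config V) :
    ∑ x', P x x' * g x' = g x + ∑ i : V, P x (flip x i) * (g (flip x i) - g x) := by
  have hinj : ∀ a ∈ (Finset.univ : Finset V), ∀ b ∈ Finset.univ,
      flip x a = flip x b → a = b := by
    intro a _ b _ hab
    by_contra hne
    have := congrFun hab a
    simp [flip_apply, hne] at this
  have h1 : ∑ x', P x x' * (g x' - g x)
      = ∑ i : V, P x (flip x i) * (g (flip x i) - g x) := by
    calc ∑ x', P x x' * (g x' - g x)
        = ∑ x' ∈ Finset.univ.image (flip x), P x x' * (g x' - g x) := by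
          apply (Finset.sum_subset (Finset.subset_univ _) _).symm
          intro x' _ hx'
          simp only [Finset.mem_image, Finset.mem_univ, true_and] at hx'
          by_cases hxx : x' = x
          · simp [hxx]
          · rw [hP.singleSite x x' hxx (fun i hi => hx' ⟨i, hi.symm⟩), zero_mul]
      _ = ∑ i : V, P x (flip x i) * (g (flip x i) - g x) := Finset.sum_image hinj
  calc ∑ x', P x x' * g x'
      = ∑ x', (P x x' * (g x' - g x) + P x x' * g x) := by
        apply Finset.sum_congr rfl; intro x' _; ring
    _ = (∑ x', P x x' * (g x' - g x)) + (∑ x', P x x') * g x := by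
        rw [Finset.sum_add_distrib, Finset.sum_mul]
    _ = g x + ∑ i : V, P x (flip x i) * (g (flip x i) - g x) := by
        rw [h1, hP.rowSum x, one_mul]; ring

lemma LPdlr_subset_general (G : SimpleGraph V) [DecidableRel G.Adj] (H : Config V → ℝ)
    (P : Config V → Config V → ℝ) (hP : IsLocalMC G P)
    (hrev : ∀ (x : Config V) (i : V),
      P x (flip x i) = P (flip x i) x * Real.exp (-(grad H i x)))
    (Λ : Finset V) : LPdlr G H Λ ⊆ LPmc G P Λ := by
  intro ν hν
  obtain ⟨hdist, hbal⟩ := hν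
  refine ⟨hdist, fun g hg => ?_⟩
  have key : ∀ y : SubConfig (closure G Λ), (Matrix.of P).mulVec g (extendC (closure G Λ) y)
      = g (extendC (closure G Λ) y) + ∑ i : V, P (extendC (closure G Λ) y) (flip (extendC (closure G Λ) y) i) *
        (g (flip (extendC (closure G Λ) y) i) - g (extendC (closure G Λ) y)) := by
    intro y
    exact sum_P_mul_eq G hP g (extendC (closure G Λ) y)
  have main : ∑ y : SubConfig (closure G Λ), ν y * (∑ i : V, P (extendC (closure G Λ) y) (flip (extendC (closure G Λ) y) i) *
      (g (flip (extendC (closure G Λ) y) i) - g (extendC (closure G Λ) y))) = 0 := by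
    have hin : ∀ y : SubConfig (closure G Λ), ∑ i : V, P (extendC (closure G Λ) y) (flip (extendC (closure G Λ) y) i) *
        (g (flip (extendC (closure G Λ) y) i) - g (extendC (closure G Λ) y))
        = ∑ i ∈ Λ, P (extendC (closure G Λ) y) (flip (extendC (closure G Λ) y) i) *
        (g (flip (extendC (closure G Λ) y) i) - g (extendC (closure G Λ) y)) := by
      intro y
      apply (Finset.sum_subset (Finset.subset_univ _) _).symm
      intro i _ hiΛ
      rw [hg i hiΛ (extendC (closure G Λ) y), sub_self, mul_zero]
    simp only [hin, Finset.mul_sum]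
    rw [Finset.sum_comm]
    apply Finset.sum_eq_zero
    intro i hi
    have hiA : i ∈ (closure G Λ) := mem_closure_of_mem hi
    have hflip : ∀ y : SubConfig (closure G Λ),
        (fun y => ν y * (P (extendC (closure G Λ) y) (flip (extendC (closure G Λ) y) i) *
          (g (flip (extendC (closure G Λ) y) i) - g (extendC (closure G Λ) y)))) (flipAt (closure G Λ) y i)
        = -((fun y => ν y * (P (extendC (closure G Λ) y) (flip (extendC (closure G Λ) y) i) *
          (g (flip (extendC (closure G Λ) y) i) - g (extendC (closure G Λ) y)))) y) := by
      intro y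
      simp only
      rw [extendC_flipAt y hiA, flip_flip]
      have e1 : ν y = ν (flipAt (closure G Λ) y i) * Real.exp (gradH (closure G Λ) H i y) := hbal y i hi
      have e2 : P (extendC (closure G Λ) y) (flip (extendC (closure G Λ) y) i)
          = P (flip (extendC (closure G Λ) y) i) (extendC (closure G Λ) y) *
            Real.exp (-(grad H i (extendC (closure G Λ) y))) := hrev (extendC (closure G Λ) y) i
      have eexp : Real.exp (gradH (closure G Λ) H i y) * Real.exp (-(grad H i (extendC (closure G Λ) y))) = 1 := by
        rw [← Real.exp_add]
        have : gradH (closure G Λ) H i y = grad H i (extendC (closure G Λ) y) := rfl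
        rw [this, add_neg_cancel, Real.exp_zero]
      rw [e1, e2]
      linear_combination (ν (flipAt (closure G Λ) y i) * P (flip (extendC (closure G Λ) y) i) (extendC (closure G Λ) y) *
        (g (flip (extendC (closure G Λ) y) i) - g (extendC (closure G Λ) y))) * eexp
    set F := fun y : SubConfig (closure G Λ) => ν y * (P (extendC (closure G Λ) y) (flip (extendC (closure G Λ) y) i) *
        (g (flip (extendC (closure G Λ) y) i) - g (extendC (closure G Λ) y))) with hF
    have hbij : Function.Bijective (fun y : SubConfig (closure G Λ) => flipAt (closure G Λ) y i) :=
      Function.Involutive.bijective (fun y => flipAt_flipAt (closure G Λ) y i)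
    have hsum : ∑ y : SubConfig (closure G Λ), F (flipAt (closure G Λ) y i) = ∑ y : SubConfig (closure G Λ), F y :=
      Fintype.sum_bijective _ hbij _ _ (fun y => rfl)
    have h2 : ∑ y : SubConfig (closure G Λ), F (flipAt (closure G Λ) y i) = ∑ y : SubConfig (closure G Λ), -(F y) :=
      Finset.sum_congr rfl fun y _ => hflip y
    rw [Finset.sum_neg_distrib] at h2
    have h0 : ∑ y : SubConfig (closure G Λ), F y = 0 := by linarith
    exact h0
  simp only [lexp, key, mul_add, Finset.sum_add_distrib, main, add_zero]
lemma gibbs_isDist (H : Config V → ℝ) : IsDist (gibbs H) := by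
  have hZ : 0 < ∑ y : Config V, Real.exp (-H y) :=
    Finset.sum_pos (fun y _ => Real.exp_pos _) ⟨fun _ => true, Finset.mem_univ _⟩
  constructor
  · intro x; exact div_nonneg (Real.exp_pos _).le hZ.le
  · rw [show ∑ x : Config V, gibbs H x
        = (∑ x : Config V, Real.exp (-H x)) / (∑ y : Config V, Real.exp (-H y)) from
      (Finset.sum_div _ _ _).symm]
    exact div_self hZ.ne'

lemma marg_isDist {A : Finset V} {μ : Config V → ℝ} (hμ : IsDist μ) :
    IsDist (marg A μ) := by
  constructor
  · intro y
    apply Finset.sum_nonneg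
    intro x _
    split
    · exact hμ.1 x
    · exact le_refl 0
  · simp only [marg]
    rw [Finset.sum_comm]
    rw [show ∑ x : Config V, ∑ y : SubConfig A, (if restrict A x = y then μ x else 0)
        = ∑ x : Config V, μ x from Finset.sum_congr rfl fun x _ => by
          rw [Finset.sum_ite_eq]
          simp]
    exact hμ.2

lemma marg_gibbs_mem_LPdlr (G : SimpleGraph V) [DecidableRel G.Adj] (β : ℝ)
    (h : V → V → Bool → Bool → ℝ) (Λ : Finset V) :
    marg (closure G Λ) (gibbs (ham G β h)) ∈ LPdlr G (ham G β h) Λ := by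
  refine ⟨marg_isDist (gibbs_isDist _), fun y i hi => ?_⟩
  have hiA : i ∈ closure G Λ := mem_closure_of_mem hi
  have hbij : Function.Bijective (fun x : Config V => flip x i) :=
    Function.Involutive.bijective (fun x => flip_flip x i)
  have step1 : marg (closure G Λ) (gibbs (ham G β h)) (flipAt (closure G Λ) y i)
      = ∑ x : Config V, if restrict (closure G Λ) x = y
          then gibbs (ham G β h) (flip x i) else 0 := by
    unfold marg
    rw [← Fintype.sum_bijective _ hbij
      (fun x => if restrict (closure G Λ) x = y then gibbs (ham G β h) (flip x i) else 0)
      (fun x => if restrict (closure G Λ) x = flipAt (closure G Λ) y i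
        then gibbs (ham G β h) x else 0) ?_]
    intro x
    have : (restrict (closure G Λ) (flip x i) = flipAt (closure G Λ) y i)
        ↔ (restrict (closure G Λ) x = y) := by
      rw [restrict_flip]
      constructor
      · intro he
        have := congrArg (fun z => flipAt (closure G Λ) z i) he
        simpa [flipAt_flipAt] using this
      · intro he; rw [he]
    simp only [this]
  rw [step1, Finset.sum_mul]
  apply Finset.sum_congr rfl
  intro x _
  rw [ite_mul, zero_mul]
  by_cases hres : restrict (closure G Λ) x = y
  · simp only [hres, if_true]
    have hagree : ∀ j, j ∈ closure G Λ → x j = extendC (closure G Λ) y j := by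
      intro j hj
      have : y ⟨j, hj⟩ = x j := by rw [← hres]; rfl
      simp [extendC, hj, this]
    have hgrad : gradH (closure G Λ) (ham G β h) i y
        = ham G β h (flip x i) - ham G β h x := by
      have := grad_ham_local G β h i x (extendC (closure G Λ) y)
        (hagree i hiA) (fun j hadj => hagree j (adj_mem_closure hi hadj))
      simpa [grad, gradH] using this.symm
    rw [hgrad]
    unfold gibbs
    rw [div_mul_eq_mul_div, ← Real.exp_add]
    congr 2
    ring
  · simp [hres]

lemma lexp_abs_le {A : Finset V} {ν : SubConfig A → ℝ} (hν : IsDist ν) (f : Config V → ℝ) :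
    |lexp ν f| ≤ ∑ y : SubConfig A, |f (extendC A y)| := by
  calc |lexp ν f| ≤ ∑ y : SubConfig A, |ν y * f (extendC A y)| :=
        Finset.abs_sum_le_sum_abs _ _
    _ ≤ ∑ y : SubConfig A, |f (extendC A y)| := by
        apply Finset.sum_le_sum
        intro y _
        rw [abs_mul, abs_of_nonneg (hν.1 y)]
        have h1 : ν y ≤ 1 := by
          have := Finset.single_le_sum (f := ν) (fun z _ => hν.1 z) (Finset.mem_univ y)
          rw [hν.2] at this; exact this
        nlinarith [abs_nonneg (f (extendC A y))]

/-- If the local Markov chain `P` is reversible with respect to the Gibbs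
distribution (`P_{x,xⁱ} = P_{xⁱ,x} e^{-∇ᵢH(x)}`), then `LP_{Λ,DLR} ⊆ LP_{Λ,MC}`;
consequently the MC bounds are weaker than the DLR bounds. -/
theorem LPdlr_subset_LPmc (G : SimpleGraph V) [DecidableRel G.Adj]
    (β : ℝ) (hβ : 0 ≤ β) (h : V → V → Bool → Bool → ℝ)
    (hsym : ∀ i j a b, h i j a b = h i j b a) (hsym' : ∀ i j, h i j = h j i)
    (P : Config V → Config V → ℝ) (hP : IsLocalMC G P)
    (hrev : ∀ (x : Config V) (i : V),
      P x (flip x i) = P (flip x i) x * Real.exp (-(grad (ham G β h) i x)))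
    (Λ : Finset V) :
    LPdlr G (ham G β h) Λ ⊆ LPmc G P Λ ∧
    ∀ f : Config V → ℝ, SupportedOn f ↑Λ →
      sInf (mcVals G P Λ f) ≤ sInf (dlrVals G (ham G β h) Λ f) ∧
      sSup (dlrVals G (ham G β h) Λ f) ≤ sSup (mcVals G P Λ f) := by
  have hsub : LPdlr G (ham G β h) Λ ⊆ LPmc G P Λ :=
    LPdlr_subset_general G (ham G β h) P hP hrev Λ
  refine ⟨hsub, fun f _ => ?_⟩
  have hvals : dlrVals G (ham G β h) Λ f ⊆ mcVals G P Λ f := by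
    rintro t ⟨ν, hν, rfl⟩
    exact ⟨ν, hsub hν, rfl⟩
  have hne : (dlrVals G (ham G β h) Λ f).Nonempty :=
    ⟨_, marg (closure G Λ) (gibbs (ham G β h)), marg_gibbs_mem_LPdlr G β h Λ, rfl⟩
  set C := ∑ y : SubConfig (closure G Λ), |f (extendC (closure G Λ) y)| with hC
  have hbb : BddBelow (mcVals G P Λ f) := by
    refine ⟨-C, ?_⟩
    rintro t ⟨ν, ⟨hdist, _⟩, rfl⟩
    have := lexp_abs_le hdist f
    have := neg_abs_le (lexp ν f)
    linarith
  have hba : BddAbove (mcVals G P Λ f) := by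
    refine ⟨C, ?_⟩
    rintro t ⟨ν, ⟨hdist, _⟩, rfl⟩
    have := lexp_abs_le hdist f
    have := le_abs_self (lexp ν f)
    linarith
  exact ⟨csInf_le_csInf hbb hne hvals, csSup_le_csSup hba hne hvals⟩

end GibbsLP
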